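/- Let c, μ > 0 and let p : ℝ → ℝ be continuous, differentiable on (a, ∞) with z ↦ p(z) p'(z) differentiable on (a, ∞), satisfying −c p'(z) − μ (p(z) p'(z))' = 0 for all z ∈ (a, ∞), together with p(z) → 0 and p(z) p'(z) → 0 as z → ∞. Then c p(z) + μ p(z) p'(z) = 0 for all z ∈ (a, ∞); in particular p'(z) = −c/μ at every z ∈ (a, ∞) where p(z) > 0. Moreover, if p > 0 on an interval (a, b) and p(b) = 0, then p(z) = (c/μ)(b − z) for all z ∈ (a, b). -/

import Mathlib

open Set Filter Topology

/-- If `p` is continuous, solves `−c p' − μ (p p')' = 0` on `(a, ∞)`,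
and `p → 0`, `p p' → 0` at `+∞`, then `c p + μ p p' = 0` on `(a, ∞)`; in particular
`p' = −c/μ` wherever `p > 0`, and if `p > 0` on `(a, b)` with `p(b) = 0` then
`p(z) = (c/μ)(b − z)` on `(a, b)`. -/
theorem stmt1
    (c μ : ℝ) (hc : 0 < c) (hμ : 0 < μ)
    (a : ℝ) (p : ℝ → ℝ)
    (hpc : Continuous p)
    (hpd : ∀ z ∈ Ioi a, DifferentiableAt ℝ p z)
    (hud : ∀ z ∈ Ioi a, DifferentiableAt ℝ (fun w => p w * deriv p w) z)
    (heq : ∀ z ∈ Ioi a,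
      -c * deriv p z - μ * deriv (fun w => p w * deriv p w) z = 0)
    (hp0 : Tendsto p atTop (𝓝 0))
    (hpp0 : Tendsto (fun z => p z * deriv p z) atTop (𝓝 0)) :
    (∀ z ∈ Ioi a, c * p z + μ * p z * deriv p z = 0) ∧
    (∀ z ∈ Ioi a, 0 < p z → deriv p z = -(c / μ)) ∧
    (∀ b, a < b → (∀ z ∈ Ioo a b, 0 < p z) → p b = 0 →
      ∀ z ∈ Ioo a b, p z = c / μ * (b - z)) := by
  set F : ℝ → ℝ := fun w => c * p w + μ * (p w * deriv p w) with hF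
  have hFderiv : ∀ x ∈ Ioi a, HasDerivAt F 0 x := by
    intro x hx
    have h1 : HasDerivAt (fun w => c * p w) (c * deriv p x) x :=
      ((hpd x hx).hasDerivAt).const_mul c
    have h2 : HasDerivAt (fun w => μ * (p w * deriv p w))
        (μ * deriv (fun w => p w * deriv p w) x) x :=
      ((hud x hx).hasDerivAt).const_mul μ
    have := h1.add h2
    have he := heq x hx
    have : HasDerivAt F (c * deriv p x + μ * deriv (fun w => p w * deriv p w) x) x := this
    convert this using 1
    linarith
  have hFcont : ContinuousOn F (Ioi a) := by
    intro x hx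
    exact ((hFderiv x hx).differentiableAt.continuousAt).continuousWithinAt
  -- F is constant equal to 0 on Ioi a
  have hF0 : ∀ z ∈ Ioi a, F z = 0 := by
    intro z hz
    have hconst : ∀ y, z ≤ y → F y = F z := by
      intro y hy
      have hsub : Icc z y ⊆ Ioi a := fun x hx => lt_of_lt_of_le hz hx.1
      have := constant_of_has_deriv_right_zero (f := F) (a := z) (b := y)
        (hFcont.mono hsub)
        (fun x hx => ((hFderiv x (hsub ⟨hx.1, hx.2.le⟩)).hasDerivWithinAt))
      exact this y ⟨hy, le_refl y⟩
    have hlim1 : Tendsto F atTop (𝓝 (F z)) := by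
      apply Tendsto.congr' _ tendsto_const_nhds
      filter_upwards [eventually_ge_atTop z] with y hy
      exact (hconst y hy).symm
    have hlim2 : Tendsto F atTop (𝓝 0) := by
      have := (hp0.const_mul c).add (hpp0.const_mul μ)
      simpa using this
    exact tendsto_nhds_unique hlim1 hlim2
  have part1 : ∀ z ∈ Ioi a, c * p z + μ * p z * deriv p z = 0 := by
    intro z hz
    have := hF0 z hz
    simp only [hF] at this
    linarith
  have part2 : ∀ z ∈ Ioi a, 0 < p z → deriv p z = -(c / μ) := by
    intro z hz hpz
    have h := part1 z hz
    have hμp : μ * p z ≠ 0 := by positivity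
    field_simp
    nlinarith
  refine ⟨part1, part2, ?_⟩
  intro b hab hpos hpb z hz
  set g : ℝ → ℝ := fun w => p w - c / μ * (b - w) with hg
  have hgd : ∀ x ∈ Ico z b, HasDerivWithinAt g 0 (Ici x) x := by
    intro x hx
    have hxIoo : x ∈ Ioo a b := ⟨lt_of_lt_of_le hz.1 hx.1, hx.2⟩
    have hxa : x ∈ Ioi a := hxIoo.1
    have hd : deriv p x = -(c / μ) := part2 x hxa (hpos x hxIoo)
    have h1 : HasDerivAt p (-(c / μ)) x := hd ▸ (hpd x hxa).hasDerivAt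
    have h2 : HasDerivAt (fun w => c / μ * (b - w)) (-(c / μ)) x := by
      have : HasDerivAt (fun w => b - w) (-1 : ℝ) x := by
        simpa using (hasDerivAt_id x).const_sub b
      simpa using this.const_mul (c / μ)
    have := h1.sub h2
    have h3 : HasDerivAt g (-(c / μ) - -(c / μ)) x := this
    rw [sub_self] at h3
    exact h3.hasDerivWithinAt
  have hgcont : ContinuousOn g (Icc z b) :=
    (hpc.sub (continuous_const.mul (continuous_const.sub continuous_id))).continuousOn
  have := constant_of_has_deriv_right_zero hgcont hgd b ⟨hz.2.le, le_refl b⟩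
  simp only [hg] at this
  have hgb : p b - c / μ * (b - b) = p z - c / μ * (b - z) := this
  rw [hpb] at hgb
  simp at hgb
  linarith
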